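/- Reduction of Hahn to Krawtchouk polynomials: ₃F₂(-s, s+1, -i; 1/2, -m; 1) = (-1)^i · (C(2m+1,2i)/C(m,i)) · ₂F₁(-2i, -m-s-1; -2m-1; 2) for integers 0 ≤ i, s ≤ m. -/

import Mathlib

open Finset

noncomputable def poch (a : ℝ) (k : ℕ) : ℝ := ∏ i ∈ Finset.range k, (a + i)

lemma poch_zero (a : ℝ) : poch a 0 = 1 := by simp [poch]

lemma poch_succ (a : ℝ) (k : ℕ) : poch a (k + 1) = poch a k * (a + k) := by
  simp [poch, Finset.prod_range_succ]

lemma poch_neg_nat (n : ℕ) : ∀ k : ℕ, poch (-(n : ℝ)) k = (-1) ^ k * (n.descFactorial k : ℝ)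
  | 0 => by simp [poch_zero]
  | (k+1) => by
    rw [poch_succ, poch_neg_nat n k, Nat.descFactorial_succ]
    by_cases h : k ≤ n
    · push_cast [h]
      ring
    · have h0 : n.descFactorial k = 0 := Nat.descFactorial_eq_zero_iff_lt.2 (by omega)
      rw [h0]
      push_cast
      ring

lemma poch_nat_succ (n : ℕ) : ∀ k : ℕ, poch ((n : ℝ) + 1) k = ((n + k).descFactorial k : ℝ)
  | 0 => by simp [poch_zero]
  | (k+1) => by
    rw [poch_succ, poch_nat_succ n k]
    have : n + (k + 1) = (n + k) + 1 := by ring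
    rw [this, Nat.succ_descFactorial_succ]
    push_cast
    ring

lemma poch_half : ∀ k : ℕ, poch (1/2 : ℝ) k = ((2*k).factorial : ℝ) / (4 ^ k * (k.factorial : ℝ))
  | 0 => by simp [poch_zero]
  | (k+1) => by
    rw [poch_succ, poch_half k]
    have h1 : 2 * (k+1) = (2*k + 1) + 1 := by ring
    rw [h1, Nat.factorial_succ, Nat.factorial_succ, Nat.factorial_succ]
    have h2 : ((2*k).factorial : ℝ) ≠ 0 := by positivity
    have h3 : ((k).factorial : ℝ) ≠ 0 := by positivity
    have h4 : (4 : ℝ) ^ k ≠ 0 := by positivity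
    push_cast
    field_simp
    ring


lemma choose_quad (n r : ℕ) :
    (n+2).choose (r+2) + n.choose (r+2) = n.choose r + 2 * (n+1).choose (r+2) := by
  have h1 : (n+2).choose (r+2) = (n+1).choose (r+1) + (n+1).choose (r+2) :=
    Nat.choose_succ_succ (n+1) (r+1)
  have h2 : (n+1).choose (r+1) = n.choose r + n.choose (r+1) := Nat.choose_succ_succ n r
  have h3 : (n+1).choose (r+2) = n.choose (r+1) + n.choose (r+2) := Nat.choose_succ_succ n (r+1)
  omega

section Hpow
variable {R : Type*} [CommRing R]

lemma sum_range_pad {M : Type*} [AddCommMonoid M] (f : ℕ → M) (a b : ℕ) (hab : a ≤ b)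
    (h : ∀ k, a ≤ k → f k = 0) :
    ∑ k ∈ Finset.range a, f k = ∑ k ∈ Finset.range b, f k := by
  refine Finset.sum_subset (Finset.range_subset_range.2 hab) ?_
  intro k _ hk
  exact h k (by simpa using hk)

lemma Srec (u v : R) (s : ℕ) :
    (∑ k ∈ Finset.range (s+2+1), ((s+2+k).choose (2*k) : R) * u^(s+2-k) * v^k)
      + u^2 * ∑ k ∈ Finset.range (s+1), ((s+k).choose (2*k) : R) * u^(s-k) * v^k
    = (v + 2*u) * ∑ k ∈ Finset.range (s+1+1), ((s+1+k).choose (2*k) : R) * u^(s+1-k) * v^k := by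
  have hu2 : u^2 * ∑ k ∈ Finset.range (s+1), ((s+k).choose (2*k) : R) * u^(s-k) * v^k
      = ∑ k ∈ Finset.range (s+2+1), ((s+k).choose (2*k) : R) * u^(s+2-k) * v^k := by
    rw [Finset.mul_sum]
    rw [show (∑ k ∈ Finset.range (s+1), u^2 * (((s+k).choose (2*k) : R) * u^(s-k) * v^k))
        = ∑ k ∈ Finset.range (s+1), ((s+k).choose (2*k) : R) * u^(s+2-k) * v^k from
      Finset.sum_congr rfl (fun k hk => by
        simp only [Finset.mem_range] at hk
        rw [show s+2-k = (s-k) + 2 from by omega]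
        ring)]
    exact sum_range_pad _ _ _ (by omega) (fun k hk => by
      have : (s+k).choose (2*k) = 0 := Nat.choose_eq_zero_of_lt (by omega)
      simp [this])
  have h2u : (2*u) * ∑ k ∈ Finset.range (s+1+1), ((s+1+k).choose (2*k) : R) * u^(s+1-k) * v^k
      = ∑ k ∈ Finset.range (s+2+1), 2*((s+1+k).choose (2*k) : R) * u^(s+2-k) * v^k := by
    rw [Finset.mul_sum]
    rw [show (∑ k ∈ Finset.range (s+1+1), 2*u * (((s+1+k).choose (2*k) : R) * u^(s+1-k) * v^k))
        = ∑ k ∈ Finset.range (s+1+1), 2*((s+1+k).choose (2*k) : R) * u^(s+2-k) * v^k from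
      Finset.sum_congr rfl (fun k hk => by
        simp only [Finset.mem_range] at hk
        rw [show s+2-k = (s+1-k) + 1 from by omega]
        ring)]
    exact sum_range_pad _ _ _ (by omega) (fun k hk => by
      have : (s+1+k).choose (2*k) = 0 := Nat.choose_eq_zero_of_lt (by omega)
      simp [this])
  have hv : v * ∑ k ∈ Finset.range (s+1+1), ((s+1+k).choose (2*k) : R) * u^(s+1-k) * v^k
      = ∑ k ∈ Finset.range (s+1+1), ((s+1+k).choose (2*k) : R) * u^(s+1-k) * v^(k+1) := by
    rw [Finset.mul_sum]
    exact Finset.sum_congr rfl (fun k _ => by ring)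
  rw [add_mul, hu2, h2u, hv]
  rw [Finset.sum_range_succ' (fun k => ((s+2+k).choose (2*k) : R) * u^(s+2-k) * v^k) (s+2),
      Finset.sum_range_succ' (fun k => ((s+k).choose (2*k) : R) * u^(s+2-k) * v^k) (s+2),
      Finset.sum_range_succ' (fun k => 2*((s+1+k).choose (2*k) : R) * u^(s+2-k) * v^k) (s+2)]
  have key : ∀ k ∈ Finset.range (s+2),
      ((s+2+(k+1)).choose (2*(k+1)) : R) * u^(s+2-(k+1)) * v^(k+1)
        + ((s+(k+1)).choose (2*(k+1)) : R) * u^(s+2-(k+1)) * v^(k+1)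
      = ((s+1+k).choose (2*k) : R) * u^(s+1-k) * v^(k+1)
        + 2*((s+1+(k+1)).choose (2*(k+1)) : R) * u^(s+2-(k+1)) * v^(k+1) := by
    intro k hk
    simp only [Finset.mem_range] at hk
    rw [show s+2-(k+1) = s+1-k from by omega, show 2*(k+1) = 2*k+2 from by omega,
        show s+2+(k+1) = (s+1+k)+2 from by omega, show s+(k+1) = s+1+k from by omega,
        show s+1+(k+1) = (s+1+k)+1 from by omega]
    have hq := choose_quad (s+1+k) (2*k)
    have hqr : (((s+1+k)+2).choose (2*k+2) : R) + ((s+1+k).choose (2*k+2) : R)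
        = ((s+1+k).choose (2*k) : R) + 2 * (((s+1+k)+1).choose (2*k+2) : R) := by
      exact_mod_cast congrArg (Nat.cast : ℕ → R) hq
    linear_combination (u^(s+1-k) * v^(k+1)) * hqr
  have hcomb := Finset.sum_congr rfl key
  rw [Finset.sum_add_distrib, Finset.sum_add_distrib] at hcomb
  have hrange : s+1+1 = s+2 := rfl
  rw [hrange]
  simp only [Nat.mul_zero, Nat.choose_zero_right, Nat.cast_one, pow_zero, mul_one, Nat.sub_zero]
  linear_combination hcomb

lemma Hpow (a b : R) (s : ℕ) :
    a^(2*s+1) + b^(2*s+1)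
      = (a + b) * ∑ k ∈ Finset.range (s+1),
          ((s+k).choose (2*k) : R) * (a*b)^(s-k) * ((a-b)^2)^k := by
  induction s using Nat.strong_induction_on with
  | _ s ih =>
    match s with
    | 0 => simp [Finset.sum_range_succ]
    | 1 =>
      rw [Finset.sum_range_succ, Finset.sum_range_succ, Finset.sum_range_zero]
      norm_num
      ring
    | (n+2) =>
      have h0 := ih n (by omega)
      have h1 := ih (n+1) (by omega)
      have hS := Srec (a*b) ((a-b)^2) n
      have goal2 : (a+b) * ∑ k ∈ Finset.range (n+2+1),
          ((n+2+k).choose (2*k) : R) * (a*b)^(n+2-k) * ((a-b)^2)^k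
          = ((a-b)^2 + 2*(a*b)) * (a^(2*(n+1)+1) + b^(2*(n+1)+1))
            - (a*b)^2 * (a^(2*n+1) + b^(2*n+1)) := by
        calc (a+b) * ∑ k ∈ Finset.range (n+2+1),
            ((n+2+k).choose (2*k) : R) * (a*b)^(n+2-k) * ((a-b)^2)^k
            = (a+b) * (((a-b)^2 + 2*(a*b)) * ∑ k ∈ Finset.range (n+1+1),
                ((n+1+k).choose (2*k) : R) * (a*b)^(n+1-k) * ((a-b)^2)^k
              - (a*b)^2 * ∑ k ∈ Finset.range (n+1),
                ((n+k).choose (2*k) : R) * (a*b)^(n-k) * ((a-b)^2)^k) := by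
              rw [← hS]; ring
          _ = ((a-b)^2 + 2*(a*b)) * ((a+b) * ∑ k ∈ Finset.range (n+1+1),
                ((n+1+k).choose (2*k) : R) * (a*b)^(n+1-k) * ((a-b)^2)^k)
              - (a*b)^2 * ((a+b) * ∑ k ∈ Finset.range (n+1),
                ((n+k).choose (2*k) : R) * (a*b)^(n-k) * ((a-b)^2)^k) := by ring
          _ = _ := by rw [← h0, ← h1]
      rw [goal2]
      ring

end Hpow

open Polynomial

lemma one_sub_sq_pow_eq (n : ℕ) :
    ((1 : ℤ[X]) - X^2)^n
      = ∑ j ∈ Finset.range (n+1), Polynomial.C ((-1)^j * (n.choose j : ℤ)) * X^(2*j) := by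
  rw [show ((1:ℤ[X]) - X^2) = (-X^2) + 1 from by ring, add_pow]
  apply Finset.sum_congr rfl
  intro j _
  have hC : Polynomial.C ((-1)^j * (n.choose j : ℤ)) = (-1)^j * (n.choose j : ℤ[X]) := by
    rw [map_mul, map_pow, map_neg, map_one, Polynomial.C_eq_natCast]
  rw [hC, pow_mul]
  ring

lemma coeff_one_sub_sq_pow (n r : ℕ) :
    (((1 : ℤ[X]) - X^2)^n).coeff (2*r) = (-1)^r * (n.choose r : ℤ) := by
  rw [one_sub_sq_pow_eq, Polynomial.finset_sum_coeff]
  simp only [Polynomial.coeff_C_mul, Polynomial.coeff_X_pow]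
  by_cases hr : r ≤ n
  · rw [Finset.sum_eq_single_of_mem r (Finset.mem_range.2 (by omega))]
    · simp
    · intro j _ hj
      rw [if_neg (by omega), mul_zero]
  · rw [Nat.choose_eq_zero_of_lt (by omega)]
    rw [Finset.sum_eq_zero]
    · simp
    · intro j hj
      simp only [Finset.mem_range] at hj
      rw [if_neg (by omega), mul_zero]

lemma coeff_one_sub_pow (n d : ℕ) :
    (((1 : ℤ[X]) - X)^n).coeff d = (-1)^d * (n.choose d : ℤ) := by
  rw [show ((1:ℤ[X]) - X) = (-X) + 1 from by ring, add_pow, Polynomial.finset_sum_coeff]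
  have hterm : ∀ j, ((-X : ℤ[X])^j * 1^(n-j) * (n.choose j : ℤ[X])).coeff d
      = if j = d then (-1)^j * (n.choose j : ℤ) else 0 := by
    intro j
    have hC : ((-X : ℤ[X])^j * 1^(n-j) * (n.choose j : ℤ[X]))
        = Polynomial.C ((-1)^j * (n.choose j : ℤ)) * X^j := by
      rw [map_mul, map_pow, map_neg, map_one, Polynomial.C_eq_natCast]
      ring
    rw [hC, Polynomial.coeff_C_mul, Polynomial.coeff_X_pow]
    by_cases h : j = d
    · rw [if_pos h, if_pos h.symm, mul_one]
    · rw [if_neg h, if_neg (fun hh => h hh.symm), mul_zero]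
  rw [Finset.sum_congr rfl (fun j _ => hterm j)]
  by_cases hd : d ≤ n
  · rw [Finset.sum_eq_single_of_mem d (Finset.mem_range.2 (by omega))]
    · simp
    · intro j _ hj
      rw [if_neg hj]
  · rw [Nat.choose_eq_zero_of_lt (by omega)]
    rw [Finset.sum_eq_zero]
    · simp
    · intro j hj
      simp only [Finset.mem_range] at hj
      rw [if_neg (by omega)]

lemma hB_gen (n i : ℕ) (q : ℤ[X]) :
    ((((1:ℤ[X]) - X^2)^n) * q).coeff (2*i)
      = ∑ j ∈ Finset.range (n+1),
          ((-1)^j * (n.choose j : ℤ)) * (if 2*j ≤ 2*i then q.coeff (2*i - 2*j) else 0) := by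
  rw [one_sub_sq_pow_eq n, Finset.sum_mul, Polynomial.finset_sum_coeff]
  apply Finset.sum_congr rfl
  intro j _
  rw [show Polynomial.C ((-1)^j * (n.choose j:ℤ)) * X^(2*j) * q
      = Polynomial.C ((-1)^j * (n.choose j:ℤ)) * (q * X^(2*j)) from by ring,
    Polynomial.coeff_C_mul, Polynomial.coeff_mul_X_pow']

lemma core (m i s : ℕ) (hi : i ≤ m) (hs : s ≤ m) :
    ∑ k ∈ Finset.range (i+1), (-4:ℤ)^k * ((s+k).choose (2*k)) * ((m-k).choose (i-k))
      = (-1)^i * ∑ k ∈ Finset.range (2*i+1),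
          (-2:ℤ)^k * ((m+s+1).choose k) * ((2*m+1-k).choose (2*i-k)) := by
  -- the three polynomials
  set A : ℤ[X] := ((1:ℤ[X]) - X^2)^(m-s) with hA
  set Bm : ℤ[X] := ((1:ℤ[X]) - X)^(2*s+1) with hBm
  set Bp : ℤ[X] := ((1:ℤ[X]) + X)^(2*s+1) with hBp
  set E : ℤ[X] := ∑ k ∈ Finset.range (s+1),
      Polynomial.C (((s+k).choose (2*k) : ℤ) * 4^k) * (X^(2*k) * ((1:ℤ[X]) - X^2)^(s-k)) with hE
  -- Step 1: 2*E = Bm + Bp  (from the Hpow identity)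
  have hE2 : Bm + Bp = 2 * E := by
    have h := Hpow ((1:ℤ[X]) - X) ((1:ℤ[X]) + X) s
    rw [show ((1:ℤ[X]) - X) + (1 + X) = 2 from by ring] at h
    rw [hBm, hBp, h, hE]
    congr 1
    apply Finset.sum_congr rfl
    intro k _
    have hC : Polynomial.C (((s+k).choose (2*k) : ℤ) * 4^k)
        = ((s+k).choose (2*k) : ℤ[X]) * 4^k := by
      rw [map_mul, map_pow, Polynomial.C_eq_natCast, map_ofNat]
    rw [hC, show ((1:ℤ[X]) - X) * (1 + X) = 1 - X^2 from by ring,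
      show (((1:ℤ[X]) - X) - (1 + X))^2 = 4 * X^2 from by ring, mul_pow, pow_mul]
    ring
  -- Step 2: coefficient of A*E at 2i equals (-1)^i * (core LHS)
  have hAE : (A * E).coeff (2*i)
      = (-1)^i * ∑ k ∈ Finset.range (i+1),
          (-4:ℤ)^k * ((s+k).choose (2*k)) * ((m-k).choose (i-k)) := by
    rw [hE, hA, Finset.mul_sum, Polynomial.finset_sum_coeff]
    have hterm : ∀ k ∈ Finset.range (s+1),
        ((((1:ℤ[X]) - X^2)^(m-s)) * (Polynomial.C (((s+k).choose (2*k) : ℤ) * 4^k)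
            * (X^(2*k) * ((1:ℤ[X]) - X^2)^(s-k)))).coeff (2*i)
        = (((s+k).choose (2*k) : ℤ) * 4^k)
            * (if k ≤ i then (-1)^(i-k) * (((m-k).choose (i-k)) : ℤ) else 0) := by
      intro k hk
      simp only [Finset.mem_range] at hk
      have hcomb : (((1:ℤ[X]) - X^2)^(m-s)) * (Polynomial.C (((s+k).choose (2*k) : ℤ) * 4^k)
            * (X^(2*k) * ((1:ℤ[X]) - X^2)^(s-k)))
          = Polynomial.C (((s+k).choose (2*k) : ℤ) * 4^k)
              * ((((1:ℤ[X]) - X^2)^(m-k)) * X^(2*k)) := by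
        rw [show m-k = (m-s)+(s-k) from by omega, pow_add]
        ring
      rw [hcomb, Polynomial.coeff_C_mul, Polynomial.coeff_mul_X_pow']
      by_cases hki : k ≤ i
      · rw [if_pos (by omega : 2*k ≤ 2*i), if_pos hki,
          show 2*i - 2*k = 2*(i-k) from by omega, coeff_one_sub_sq_pow]
      · rw [if_neg (by omega), if_neg hki]
    rw [Finset.sum_congr rfl hterm]
    have hpad1 : ∑ k ∈ Finset.range (s+1), ((((s+k).choose (2*k) : ℤ) * 4^k)
          * (if k ≤ i then (-1)^(i-k) * (((m-k).choose (i-k)) : ℤ) else 0))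
        = ∑ k ∈ Finset.range (max s i + 1), ((((s+k).choose (2*k) : ℤ) * 4^k)
          * (if k ≤ i then (-1)^(i-k) * (((m-k).choose (i-k)) : ℤ) else 0)) := by
      apply sum_range_pad _ _ _ (by omega)
      intro k hk
      rw [Nat.choose_eq_zero_of_lt (by omega : s+k < 2*k)]
      simp
    have hpad2 : ∑ k ∈ Finset.range (i+1), ((((s+k).choose (2*k) : ℤ) * 4^k)
          * (if k ≤ i then (-1)^(i-k) * (((m-k).choose (i-k)) : ℤ) else 0))
        = ∑ k ∈ Finset.range (max s i + 1), ((((s+k).choose (2*k) : ℤ) * 4^k)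
          * (if k ≤ i then (-1)^(i-k) * (((m-k).choose (i-k)) : ℤ) else 0)) := by
      apply sum_range_pad _ _ _ (by omega)
      intro k hk
      rw [if_neg (by omega), mul_zero]
    rw [hpad1, ← hpad2, Finset.mul_sum]
    apply Finset.sum_congr rfl
    intro k hk
    simp only [Finset.mem_range] at hk
    rw [if_pos (by omega : k ≤ i)]
    have hsign : (-1:ℤ)^(i-k) * (-1)^k = (-1)^i := by
      rw [← pow_add]
      congr 1
      omega
    have h4 : (-4:ℤ)^k = (-1)^k * 4^k := by
      rw [show (-4:ℤ) = (-1) * 4 from by norm_num, mul_pow]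
    have h2k : (-1:ℤ)^k * (-1)^k = 1 := by
      rw [← mul_pow]
      norm_num
    have hsign' : (-1:ℤ)^(i-k) = (-1)^i * (-1)^k := by
      calc (-1:ℤ)^(i-k) = (-1)^(i-k) * ((-1)^k * (-1)^k) := by rw [h2k, mul_one]
        _ = ((-1)^(i-k) * (-1)^k) * (-1)^k := by ring
        _ = (-1)^i * (-1)^k := by rw [hsign]
    rw [h4, hsign']
    ring
  -- Step 3: A * Bm = (1-X)^(m+s+1) * (1+X)^(m-s) and its coefficient
  have hABm : A * Bm = ((1:ℤ[X]) - X)^(m+s+1) * ((1:ℤ[X]) + X)^(m-s) := by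
    rw [hA, hBm, show ((1:ℤ[X]) - X^2) = (1-X)*(1+X) from by ring, mul_pow,
      show m+s+1 = (m-s)+(2*s+1) from by omega, pow_add]
    ring
  have hPcoeff : (A * Bm).coeff (2*i)
      = ∑ k ∈ Finset.range (2*i+1),
          (-2:ℤ)^k * ((m+s+1).choose k) * ((2*m+1-k).choose (2*i-k)) := by
    rw [hABm, show ((1:ℤ[X]) - X) = (-2)*X + (1+X) from by ring, add_pow,
      Finset.sum_mul, Polynomial.finset_sum_coeff]
    have hterm : ∀ k ∈ Finset.range (m+s+1+1),
        ((((-2:ℤ[X])*X)^k * ((1:ℤ[X])+X)^(m+s+1-k) * ((m+s+1).choose k : ℤ[X])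
            * ((1:ℤ[X])+X)^(m-s)).coeff (2*i))
        = ((-2:ℤ)^k * ((m+s+1).choose k : ℤ))
            * (if k ≤ 2*i then (((2*m+1-k).choose (2*i-k)) : ℤ) else 0) := by
      intro k hk
      simp only [Finset.mem_range] at hk
      have hcomb : (((-2:ℤ[X])*X)^k * ((1:ℤ[X])+X)^(m+s+1-k) * ((m+s+1).choose k : ℤ[X])
            * ((1:ℤ[X])+X)^(m-s))
          = Polynomial.C ((-2:ℤ)^k * ((m+s+1).choose k : ℤ))
              * (((1:ℤ[X])+X)^(2*m+1-k) * X^k) := by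
        have hC : Polynomial.C ((-2:ℤ)^k * ((m+s+1).choose k : ℤ))
            = ((-2:ℤ[X]))^k * ((m+s+1).choose k : ℤ[X]) := by
          rw [map_mul, map_pow, map_neg, map_ofNat, Polynomial.C_eq_natCast]
        rw [hC, show 2*m+1-k = (m+s+1-k)+(m-s) from by omega, pow_add]
        ring
      rw [hcomb, Polynomial.coeff_C_mul, Polynomial.coeff_mul_X_pow']
      by_cases hki : k ≤ 2*i
      · rw [if_pos hki, if_pos hki, Polynomial.coeff_one_add_X_pow]
      · rw [if_neg hki, if_neg hki]
    rw [Finset.sum_congr rfl hterm]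
    have hpad1 : ∑ k ∈ Finset.range (m+s+1+1), (((-2:ℤ)^k * ((m+s+1).choose k : ℤ))
          * (if k ≤ 2*i then (((2*m+1-k).choose (2*i-k)) : ℤ) else 0))
        = ∑ k ∈ Finset.range (max (m+s+1) (2*i) + 1), (((-2:ℤ)^k * ((m+s+1).choose k : ℤ))
          * (if k ≤ 2*i then (((2*m+1-k).choose (2*i-k)) : ℤ) else 0)) := by
      apply sum_range_pad _ _ _ (by omega)
      intro k hk
      rw [Nat.choose_eq_zero_of_lt (by omega : m+s+1 < k)]
      simp
    have hpad2 : ∑ k ∈ Finset.range (2*i+1), (((-2:ℤ)^k * ((m+s+1).choose k : ℤ))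
          * (if k ≤ 2*i then (((2*m+1-k).choose (2*i-k)) : ℤ) else 0))
        = ∑ k ∈ Finset.range (max (m+s+1) (2*i) + 1), (((-2:ℤ)^k * ((m+s+1).choose k : ℤ))
          * (if k ≤ 2*i then (((2*m+1-k).choose (2*i-k)) : ℤ) else 0)) := by
      apply sum_range_pad _ _ _ (by omega)
      intro k hk
      rw [if_neg (by omega), mul_zero]
    rw [hpad1, ← hpad2]
    apply Finset.sum_congr rfl
    intro k hk
    simp only [Finset.mem_range] at hk
    rw [if_pos (by omega : k ≤ 2*i)]
    try ring
  -- Step 4: (A*Bm) and (A*Bp) have the same coefficient at 2i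
  have hPP' : (A * Bm).coeff (2*i) = (A * Bp).coeff (2*i) := by
    rw [hA, hBm, hBp, hB_gen, hB_gen]
    apply Finset.sum_congr rfl
    intro j _
    congr 1
    by_cases hji : 2*j ≤ 2*i
    · rw [if_pos hji, if_pos hji, coeff_one_sub_pow, Polynomial.coeff_one_add_X_pow,
        show (-1:ℤ)^(2*i-2*j) = 1 from Even.neg_one_pow ⟨i-j, by omega⟩, one_mul]
    · rw [if_neg hji, if_neg hji]
  -- Step 5: combine
  have hhalf : (A * E).coeff (2*i) = (A * Bm).coeff (2*i) := by
    have h2 : (2:ℤ) * (A * E).coeff (2*i) = (2:ℤ) * (A * Bm).coeff (2*i) := by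
      have hL : A * (Bm + Bp) = 2 * (A * E) := by
        rw [hE2]
        ring
      have hc := congrArg (fun p : ℤ[X] => p.coeff (2*i)) hL
      simp only [mul_add, Polynomial.coeff_add] at hc
      rw [show (2:ℤ[X]) * (A*E) = Polynomial.C 2 * (A*E) from by norm_num,
        Polynomial.coeff_C_mul] at hc
      rw [← hc, hPP']
      ring
    exact mul_left_cancel₀ two_ne_zero h2
  have key : (-1:ℤ)^i * (∑ k ∈ Finset.range (i+1),
        (-4:ℤ)^k * ((s+k).choose (2*k)) * ((m-k).choose (i-k)))
      = ∑ k ∈ Finset.range (2*i+1),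
          (-2:ℤ)^k * ((m+s+1).choose k) * ((2*m+1-k).choose (2*i-k)) := by
    rw [← hAE, hhalf, hPcoeff]
  have hii : (-1:ℤ)^i * (-1)^i = 1 := by
    rw [← mul_pow]
    norm_num
  calc ∑ k ∈ Finset.range (i+1), (-4:ℤ)^k * ((s+k).choose (2*k)) * ((m-k).choose (i-k))
      = ((-1:ℤ)^i * (-1)^i) * ∑ k ∈ Finset.range (i+1),
          (-4:ℤ)^k * ((s+k).choose (2*k)) * ((m-k).choose (i-k)) := by rw [hii, one_mul]
    _ = (-1:ℤ)^i * ((-1:ℤ)^i * ∑ k ∈ Finset.range (i+1),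
          (-4:ℤ)^k * ((s+k).choose (2*k)) * ((m-k).choose (i-k))) := by ring
    _ = (-1:ℤ)^i * ∑ k ∈ Finset.range (2*i+1),
          (-2:ℤ)^k * ((m+s+1).choose k) * ((2*m+1-k).choose (2*i-k)) := by rw [key]

lemma descFactorial_add (n a b : ℕ) :
    n.descFactorial (a+b) = n.descFactorial a * (n - a).descFactorial b := by
  induction b with
  | zero => simp
  | succ t ih =>
    rw [show a + (t+1) = (a+t)+1 from rfl, Nat.descFactorial_succ, ih,
      Nat.descFactorial_succ, show n - (a+t) = n - a - t from by omega]
    ring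

lemma descFactorial_split (s k : ℕ) :
    (s+k).descFactorial (2*k) = (s+k).descFactorial k * s.descFactorial k := by
  rw [show 2*k = k + k from by omega, descFactorial_add, show s + k - k = s from by omega]

lemma lhs_term (m i s k : ℕ) (hk : k ≤ i) (hi : i ≤ m) :
    (m.choose i : ℝ) * (poch (-(s : ℝ)) k * poch ((s : ℝ) + 1) k * poch (-(i : ℝ)) k /
        ((k.factorial : ℝ) * poch (1 / 2) k * poch (-(m : ℝ)) k))
    = (((-4:ℤ)^k * ((s+k).choose (2*k)) * ((m-k).choose (i-k)) : ℤ) : ℝ) := by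
  rw [poch_neg_nat s, poch_neg_nat i, poch_neg_nat m, poch_nat_succ, poch_half]
  have e1 : (((s+k).descFactorial k : ℕ) : ℝ) * ((s.descFactorial k : ℕ) : ℝ)
      = (((2*k).factorial : ℕ) : ℝ) * (((s+k).choose (2*k) : ℕ) : ℝ) := by
    have h1 := descFactorial_split s k
    have h2 : (s+k).descFactorial (2*k) = (2*k).factorial * (s+k).choose (2*k) :=
      Nat.descFactorial_eq_factorial_mul_choose _ _
    exact_mod_cast congrArg (Nat.cast : ℕ → ℝ) (h1 ▸ h2)
  have e2 : ((i.descFactorial k : ℕ) : ℝ) = (k.factorial : ℝ) * (i.choose k : ℝ) := by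
    exact_mod_cast congrArg (Nat.cast : ℕ → ℝ) (Nat.descFactorial_eq_factorial_mul_choose i k)
  have e3 : ((m.descFactorial k : ℕ) : ℝ) = (k.factorial : ℝ) * (m.choose k : ℝ) := by
    exact_mod_cast congrArg (Nat.cast : ℕ → ℝ) (Nat.descFactorial_eq_factorial_mul_choose m k)
  have e4 : (m.choose i : ℝ) * (i.choose k : ℝ) = (m.choose k : ℝ) * ((m-k).choose (i-k) : ℝ) := by
    exact_mod_cast congrArg (Nat.cast : ℕ → ℝ) (Nat.choose_mul (n := m) hk)
  have hf : (k.factorial : ℝ) ≠ 0 := by positivity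
  have hg : ((2*k).factorial : ℝ) ≠ 0 := by positivity
  have h4 : (4:ℝ)^k ≠ 0 := by positivity
  have hsg : ((-1:ℝ))^k ≠ 0 := pow_ne_zero k (by norm_num)
  have hdm : ((m.descFactorial k : ℕ) : ℝ) ≠ 0 := by
    refine Nat.cast_ne_zero.2 (fun h0 => ?_)
    have := Nat.descFactorial_eq_zero_iff_lt.1 h0
    omega
  have hBval : (k.factorial : ℝ) * (((2*k).factorial:ℝ) / (4^k * (k.factorial : ℝ)))
        * ((-1)^k * ((m.descFactorial k : ℕ) : ℝ))
      = (((2*k).factorial:ℝ) * ((-1)^k * ((m.descFactorial k : ℕ) : ℝ))) / 4^k := by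
    field_simp
  have hG : (((2*k).factorial:ℝ) * ((-1)^k * ((m.descFactorial k : ℕ) : ℝ))) ≠ 0 :=
    mul_ne_zero hg (mul_ne_zero hsg hdm)
  rw [hBval, div_div_eq_mul_div, ← mul_div_assoc, div_eq_iff hG]
  push_cast
  rw [show ((-4:ℝ))^k = (-1)^k * 4^k from by rw [show (-4:ℝ) = (-1)*4 from by norm_num, mul_pow]]
  rw [e2, e3]
  linear_combination (((-1:ℝ))^k * ((-1:ℝ))^k * 4^k * (k.factorial : ℝ)
      * (m.choose i : ℝ) * (i.choose k : ℝ)) * e1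
    + (((-1:ℝ))^k * ((-1:ℝ))^k * 4^k * (k.factorial : ℝ)
      * ((2*k).factorial : ℝ) * ((s+k).choose (2*k) : ℝ)) * e4

lemma rhs_term (m i s k : ℕ) (hk : k ≤ 2*i) (hi : i ≤ m) :
    ((2*m+1).choose (2*i) : ℝ) * (poch (-(2 * (i : ℝ))) k * poch (-((m : ℝ) + s + 1)) k /
        (poch (-(2 * (m : ℝ)) - 1) k * (k.factorial : ℝ)) * 2 ^ k)
    = (((-2:ℤ)^k * ((m+s+1).choose k) * ((2*m+1-k).choose (2*i-k)) : ℤ) : ℝ) := by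
  have c1 : -(2 * (i:ℝ)) = -(((2*i : ℕ)) : ℝ) := by push_cast; ring
  have c2 : -((m:ℝ) + s + 1) = -(((m+s+1 : ℕ)) : ℝ) := by push_cast; ring
  have c3 : -(2 * (m:ℝ)) - 1 = -(((2*m+1 : ℕ)) : ℝ) := by push_cast; ring
  rw [c1, c2, c3, poch_neg_nat (2*i), poch_neg_nat (m+s+1), poch_neg_nat (2*m+1)]
  have e1 : (((2*i).descFactorial k : ℕ) : ℝ) = (k.factorial : ℝ) * ((2*i).choose k : ℝ) := by
    exact_mod_cast congrArg (Nat.cast : ℕ → ℝ) (Nat.descFactorial_eq_factorial_mul_choose (2*i) k)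
  have e2 : (((m+s+1).descFactorial k : ℕ) : ℝ) = (k.factorial : ℝ) * ((m+s+1).choose k : ℝ) := by
    exact_mod_cast congrArg (Nat.cast : ℕ → ℝ) (Nat.descFactorial_eq_factorial_mul_choose (m+s+1) k)
  have e3 : (((2*m+1).descFactorial k : ℕ) : ℝ) = (k.factorial : ℝ) * ((2*m+1).choose k : ℝ) := by
    exact_mod_cast congrArg (Nat.cast : ℕ → ℝ) (Nat.descFactorial_eq_factorial_mul_choose (2*m+1) k)
  have e4 : ((2*m+1).choose (2*i) : ℝ) * ((2*i).choose k : ℝ)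
      = ((2*m+1).choose k : ℝ) * ((2*m+1-k).choose (2*i-k) : ℝ) := by
    exact_mod_cast congrArg (Nat.cast : ℕ → ℝ) (Nat.choose_mul (n := 2*m+1) hk)
  have hf : (k.factorial : ℝ) ≠ 0 := by positivity
  have hsg : ((-1:ℝ))^k ≠ 0 := pow_ne_zero k (by norm_num)
  have hd3 : (((2*m+1).descFactorial k : ℕ) : ℝ) ≠ 0 := by
    refine Nat.cast_ne_zero.2 (fun h0 => ?_)
    have := Nat.descFactorial_eq_zero_iff_lt.1 h0
    omega
  have hD : (((-1:ℝ))^k * (((2*m+1).descFactorial k : ℕ) : ℝ)) * (k.factorial : ℝ) ≠ 0 :=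
    mul_ne_zero (mul_ne_zero hsg hd3) hf
  rw [div_mul_eq_mul_div, ← mul_div_assoc, div_eq_iff hD]
  push_cast
  rw [show ((-2:ℝ))^k = (-1)^k * 2^k from by rw [show (-2:ℝ) = (-1)*2 from by norm_num, mul_pow]]
  rw [e1, e2, e3]
  linear_combination (((-1:ℝ))^k * ((-1:ℝ))^k * 2^k * (k.factorial : ℝ) * (k.factorial : ℝ)
    * ((m+s+1).choose k : ℝ)) * e4

/-- Reduction of Hahn polynomials `Q_s(i;-1/2,1/2,m)` to symmetric Krawtchouk polynomials:
`₃F₂(-s,s+1,-i;1/2,-m;1) = (-1)^i (C(2m+1,2i)/C(m,i)) ₂F₁(-2i,-m-s-1;-2m-1;2)`. -/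
theorem hahn_to_krawtchouk_even (m i s : ℕ) (hi : i ≤ m) (hs : s ≤ m) :
    ∑ k ∈ Finset.range (i + 1),
        poch (-(s : ℝ)) k * poch ((s : ℝ) + 1) k * poch (-(i : ℝ)) k /
          ((k.factorial : ℝ) * poch (1 / 2) k * poch (-(m : ℝ)) k)
      = (-1 : ℝ) ^ i * ((Nat.choose (2 * m + 1) (2 * i) : ℝ) / (Nat.choose m i : ℝ))
          * ∑ k ∈ Finset.range (2 * i + 1),
              poch (-(2 * (i : ℝ))) k * poch (-((m : ℝ) + s + 1)) k /
                (poch (-(2 * (m : ℝ)) - 1) k * (k.factorial : ℝ)) * 2 ^ k := by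
  have hcmi : (m.choose i : ℝ) ≠ 0 := Nat.cast_ne_zero.2 (Nat.choose_pos hi).ne'
  have hc2 : ((2*m+1).choose (2*i) : ℝ) ≠ 0 :=
    Nat.cast_ne_zero.2 (Nat.choose_pos (by omega)).ne'
  have hL : (m.choose i : ℝ) * ∑ k ∈ Finset.range (i + 1),
        poch (-(s : ℝ)) k * poch ((s : ℝ) + 1) k * poch (-(i : ℝ)) k /
          ((k.factorial : ℝ) * poch (1 / 2) k * poch (-(m : ℝ)) k)
      = ((∑ k ∈ Finset.range (i+1),
          (-4:ℤ)^k * ((s+k).choose (2*k)) * ((m-k).choose (i-k)) : ℤ) : ℝ) := by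
    rw [Finset.mul_sum]
    push_cast [Int.cast_sum]
    apply Finset.sum_congr rfl
    intro k hk
    simp only [Finset.mem_range] at hk
    have := lhs_term m i s k (by omega) hi
    push_cast at this
    exact this
  have hR : ((2*m+1).choose (2*i) : ℝ) * ∑ k ∈ Finset.range (2 * i + 1),
        poch (-(2 * (i : ℝ))) k * poch (-((m : ℝ) + s + 1)) k /
          (poch (-(2 * (m : ℝ)) - 1) k * (k.factorial : ℝ)) * 2 ^ k
      = ((∑ k ∈ Finset.range (2*i+1),
          (-2:ℤ)^k * ((m+s+1).choose k) * ((2*m+1-k).choose (2*i-k)) : ℤ) : ℝ) := by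
    rw [Finset.mul_sum]
    push_cast [Int.cast_sum]
    apply Finset.sum_congr rfl
    intro k hk
    simp only [Finset.mem_range] at hk
    have := rhs_term m i s k (by omega) hi
    push_cast at this
    exact this
  have hcore := core m i s hi hs
  have hcoreR : ((∑ k ∈ Finset.range (i+1),
        (-4:ℤ)^k * ((s+k).choose (2*k)) * ((m-k).choose (i-k)) : ℤ) : ℝ)
      = (-1:ℝ)^i * ((∑ k ∈ Finset.range (2*i+1),
          (-2:ℤ)^k * ((m+s+1).choose k) * ((2*m+1-k).choose (2*i-k)) : ℤ) : ℝ) := by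
    rw [hcore]
    push_cast
    ring
  apply mul_left_cancel₀ hcmi
  rw [hL, hcoreR, ← hR]
  have h2m : (Nat.choose (2 * m + 1) (2 * i) : ℝ) = ((2*m+1).choose (2*i) : ℝ) := by norm_num
  field_simp
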